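/- Let n ≥ 1 and c ∈ (0,1). There is a constant c' > 0, depending only on n and c, such that the following holds. Let F ⊂ ℝ^{n+1} be a closed set, let B(x,r) be a ball, and suppose there exist two balls B₁ and B₂, each of radius cr and contained in B(x,r), lying in two distinct connected components of ℝ^{n+1} ∖ F. If H^n(F ∩ B(x,r)) < ∞, then H^n(F ∩ B(x,r)) ≥ c' r^n. (In particular, an open set with locally finite H^n boundary measure satisfying the 2-sided corkscrew condition has lower ADR boundary.) -/

import Mathlib

open Metric MeasureTheory Set
open scoped NNReal ENNReal

noncomputable section

/-- `ℝ^{n+1}` -/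
abbrev Euc (n : ℕ) : Type := EuclideanSpace ℝ (Fin (n + 1))

/-- The distance between two subsets of `ℝ^{n+1}`. -/
def sDist {n : ℕ} (A B : Set (Euc n)) : ℝ := sInf (Set.image2 dist A B)

/-- `E ⊆ ℝ^{n+1}` is an `n`-dimensional Ahlfors-David regular set with constant `C`. -/
def IsADR (n : ℕ) (E : Set (Euc n)) (C : ℝ) : Prop :=
  IsClosed E ∧ 1 ≤ C ∧ ∀ x ∈ E, ∀ r : ℝ, 0 < r → ENNReal.ofReal r < EMetric.diam E →
    ENNReal.ofReal (C⁻¹ * r ^ n) ≤ μH[(n : ℝ)] (E ∩ ball x r) ∧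
      μH[(n : ℝ)] (E ∩ ball x r) ≤ ENNReal.ofReal (C * r ^ n)

/-- Two points of a preconnected subset of `U` have the same connected component in `U`. -/
lemma connectedComponentIn_eq_of_isPreconnected {α : Type*} [TopologicalSpace α]
    {U T : Set α} (hT : IsPreconnected T) (hTU : T ⊆ U) {p q : α}
    (hp : p ∈ T) (hq : q ∈ T) :
    connectedComponentIn U p = connectedComponentIn U q :=
  connectedComponentIn_eq (hT.subset_connectedComponentIn hp hTU hq)

/-- Lower bound on the `n`-dimensional Hausdorff measure of a ball in `ℝ^n`. -/
lemma hausdorff_ball_lower (n : ℕ) (hn : 1 ≤ n) (w : EuclideanSpace ℝ (Fin n)) {ρ : ℝ}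
    (hρ : 0 ≤ ρ) :
    ENNReal.ofReal (ρ ^ n) * volume (ball (0 : EuclideanSpace ℝ (Fin n)) 1)
      ≤ μH[(n : ℝ)] (ball w ρ) := by
  haveI : Nontrivial (EuclideanSpace ℝ (Fin n)) :=
    Module.nontrivial_of_finrank_pos (R := ℝ) (by rw [finrank_euclideanSpace_fin]; omega)
  have hlip : LipschitzWith 1 (WithLp.equiv 2 (Fin n → ℝ)) := PiLp.lipschitzWith_ofLp 2 _
  have h1 := hlip.hausdorffMeasure_image_le (d := (n : ℝ)) (by positivity) (ball w ρ)
  have hpi : (μH[(n : ℝ)] : Measure (Fin n → ℝ)) = volume := by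
    simpa using MeasureTheory.hausdorffMeasure_pi_real (ι := Fin n)
  have himg : (WithLp.equiv 2 (Fin n → ℝ)) '' (ball w ρ)
      = (MeasurableEquiv.toLp 2 (Fin n → ℝ)).symm.symm ⁻¹' (ball w ρ) := by
    rw [← MeasurableEquiv.image_eq_preimage_symm]
    rfl
  have hv : volume ((MeasurableEquiv.toLp 2 (Fin n → ℝ)).symm.symm ⁻¹' (ball w ρ))
      = volume (ball w ρ) :=
    ((EuclideanSpace.volume_preserving_symm_measurableEquiv_toLp (Fin n)).symm _).measure_preimage
      measurableSet_ball.nullMeasurableSet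
  have hball : volume (ball w ρ) = ENNReal.ofReal (ρ ^ n)
      * volume (ball (0 : EuclideanSpace ℝ (Fin n)) 1) := by
    rw [Measure.addHaar_ball volume w hρ, finrank_euclideanSpace_fin]
  calc ENNReal.ofReal (ρ ^ n) * volume (ball (0 : EuclideanSpace ℝ (Fin n)) 1)
      = volume (ball w ρ) := hball.symm
    _ = μH[(n : ℝ)] ((WithLp.equiv 2 (Fin n → ℝ)) '' (ball w ρ)) := by
        rw [himg, hpi, hv]
    _ ≤ (1 : ℝ≥0) ^ (n : ℝ) * μH[(n : ℝ)] (ball w ρ) := h1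
    _ = μH[(n : ℝ)] (ball w ρ) := by simp

/-- **Lower ADR bound via the 2-sided corkscrew condition and the isoperimetric
inequality.** Let `n ≥ 1`, `c ∈ (0,1)`. There is `c' > 0` depending only on `n` and
`c` such that: if `F ⊆ ℝ^{n+1}` is closed and `B(x,r)` contains two balls of radius
`c r` lying in two distinct connected components of `ℝ^{n+1} ∖ F`, and
`H^n(F ∩ B(x,r)) < ∞`, then `H^n(F ∩ B(x,r)) ≥ c' rⁿ`. -/
theorem lower_ADR_of_two_sided_corkscrew
    (n : ℕ) (hn : 1 ≤ n) (c : ℝ) (hc0 : 0 < c) (hc1 : c < 1) :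
    ∃ c' : ℝ, 0 < c' ∧
      ∀ F : Set (Euc n), IsClosed F →
      ∀ (x : Euc n) (r : ℝ), 0 < r →
      ∀ X₁ X₂ : Euc n,
        ball X₁ (c * r) ⊆ ball x r → ball X₂ (c * r) ⊆ ball x r →
        ball X₁ (c * r) ⊆ Fᶜ → ball X₂ (c * r) ⊆ Fᶜ →
        connectedComponentIn Fᶜ X₁ ≠ connectedComponentIn Fᶜ X₂ →
        μH[(n : ℝ)] (F ∩ ball x r) < ⊤ →
        ENNReal.ofReal (c' * r ^ n) ≤ μH[(n : ℝ)] (F ∩ ball x r) := by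
  classical
  set V := EuclideanSpace ℝ (Fin n) with hV
  have hvol_ne_top : volume (ball (0 : V) 1) ≠ ⊤ := measure_ball_lt_top.ne
  have hvol_pos : 0 < volume (ball (0 : V) 1) := measure_ball_pos volume 0 one_pos
  refine ⟨(volume (ball (0 : V) 1)).toReal * c ^ n, ?_, ?_⟩
  · have h1 : 0 < (volume (ball (0 : V) 1)).toReal :=
      ENNReal.toReal_pos hvol_pos.ne' hvol_ne_top
    positivity
  intro F hF x r hr X₁ X₂ hB1 hB2 hF1 hF2 hcomp _
  have hcr : 0 < c * r := mul_pos hc0 hr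
  have hne : X₂ - X₁ ≠ 0 := by
    intro h
    exact hcomp (by rw [sub_eq_zero] at h; rw [h])
  set v : Euc n := X₂ - X₁ with hvdef
  set K : Submodule ℝ (Euc n) := (ℝ ∙ v)ᗮ with hKdef
  have hK : Module.finrank ℝ K = n := by
    have h1 := Submodule.finrank_add_finrank_orthogonal (K := (ℝ ∙ v : Submodule ℝ (Euc n)))
    rw [finrank_span_singleton hne, finrank_euclideanSpace_fin] at h1
    rw [← hKdef] at h1
    omega
  set e : K ≃ₗᵢ[ℝ] V := ((stdOrthonormalBasis ℝ K).reindex (finCongr hK)).repr with he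
  set P : Euc n →L[ℝ] K := K.orthogonalProjectionOnto with hP
  set g : Euc n → V := fun z => e (P z) with hg
  have hlipg : LipschitzWith 1 g := by
    apply LipschitzWith.of_dist_le_mul
    intro z z'
    simp only [NNReal.coe_one, one_mul]
    have h1 : dist (g z) (g z') = dist (P z) (P z') := e.isometry.dist_eq _ _
    rw [h1, dist_eq_norm, dist_eq_norm, ← map_sub]
    calc ‖P (z - z')‖ ≤ ‖P‖ * ‖z - z'‖ := P.le_opNorm _
      _ ≤ 1 * ‖z - z'‖ := by
          gcongr
          exact Submodule.orthogonalProjectionOnto_norm_le K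
      _ = ‖z - z'‖ := one_mul _
  -- the projection of `F ∩ ball x r` covers a ball of radius `c*r`
  have hsub : ball (g X₁) (c * r) ⊆ g '' (F ∩ ball x r) := by
    intro w hw
    set u : K := e.symm (w - g X₁) with hu
    have hun : ‖(u : Euc n)‖ < c * r := by
      have h2 : ‖u‖ = ‖w - g X₁‖ := by rw [hu]; exact e.symm.norm_map _
      have h3 : ‖(u : Euc n)‖ = ‖u‖ := rfl
      rw [h3, h2, ← dist_eq_norm]
      exact mem_ball.mp hw
    set a : Euc n := X₁ + (u : Euc n) with ha
    set b2 : Euc n := X₂ + (u : Euc n) with hb2def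
    have ha1 : a ∈ ball X₁ (c * r) := by
      rw [mem_ball_iff_norm, ha, add_sub_cancel_left]
      exact hun
    have hb1 : b2 ∈ ball X₂ (c * r) := by
      rw [mem_ball_iff_norm, hb2def, add_sub_cancel_left]
      exact hun
    have hseg : segment ℝ a b2 ⊆ ball x r :=
      (convex_ball x r).segment_subset (hB1 ha1) (hB2 hb1)
    have hhit : ¬ segment ℝ a b2 ⊆ Fᶜ := by
      intro hsc
      have e1 : connectedComponentIn Fᶜ X₁ = connectedComponentIn Fᶜ a :=
        connectedComponentIn_eq_of_isPreconnected (convex_ball X₁ (c * r)).isPreconnected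
          hF1 (mem_ball_self hcr) ha1
      have e2 : connectedComponentIn Fᶜ a = connectedComponentIn Fᶜ b2 :=
        connectedComponentIn_eq_of_isPreconnected (convex_segment a b2).isPreconnected
          hsc (left_mem_segment ℝ a b2) (right_mem_segment ℝ a b2)
      have e3 : connectedComponentIn Fᶜ b2 = connectedComponentIn Fᶜ X₂ :=
        connectedComponentIn_eq_of_isPreconnected (convex_ball X₂ (c * r)).isPreconnected
          hF2 hb1 (mem_ball_self hcr)
      exact hcomp (e1.trans (e2.trans e3))
    obtain ⟨p, hpseg, hpF⟩ : ∃ p ∈ segment ℝ a b2, p ∈ F := by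
      by_contra h
      push_neg at h
      exact hhit fun p hp => h p hp
    refine ⟨p, ⟨hpF, hseg hpseg⟩, ?_⟩
    -- compute `g p = w`
    have hPu : P (u : Euc n) = u := K.orthogonalProjectionOnto_mem_subspace_eq_self u
    have hPv : P v = 0 :=
      Submodule.orthogonalProjectionOnto_apply_of_mem_orthogonal
        ((Submodule.le_orthogonal_orthogonal (ℝ ∙ v)) (Submodule.mem_span_singleton_self v))
    have hga : g a = w := by
      rw [hg, ha]
      simp only [map_add, hPu]
      rw [hu]
      simp only [map_add, LinearIsometryEquiv.apply_symm_apply]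
      rw [hg]
      abel
    have hX2 : X₂ = X₁ + v := by rw [hvdef]; abel
    have hgb : g b2 = w := by
      rw [hg, hb2def, hX2]
      simp only [map_add, hPu, hPv, map_zero]
      have : e (P X₁) + (0 : V) + e u = e (P X₁) + e u := by abel
      rw [this, hu, LinearIsometryEquiv.apply_symm_apply, hg]
      abel
    obtain ⟨s, t, hs, ht, hst, hp⟩ := hpseg
    rw [← hp]
    have : g (s • a + t • b2) = s • g a + t • g b2 := by
      simp only [hg, map_add, _root_.map_smul]
    rw [this, hga, hgb, ← add_smul, hst, one_smul]
  -- put everything together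
  have hmain := hlipg.hausdorffMeasure_image_le (d := (n : ℝ)) (by positivity) (F ∩ ball x r)
  calc ENNReal.ofReal ((volume (ball (0 : V) 1)).toReal * c ^ n * r ^ n)
      = ENNReal.ofReal ((c * r) ^ n) * volume (ball (0 : V) 1) := by
        rw [mul_assoc, ENNReal.ofReal_mul ENNReal.toReal_nonneg,
          ENNReal.ofReal_toReal hvol_ne_top, mul_pow, mul_comm]
    _ ≤ μH[(n : ℝ)] (ball (g X₁) (c * r)) := hausdorff_ball_lower n hn (g X₁) hcr.le
    _ ≤ μH[(n : ℝ)] (g '' (F ∩ ball x r)) := measure_mono hsub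
    _ ≤ (1 : ℝ≥0) ^ (n : ℝ) * μH[(n : ℝ)] (F ∩ ball x r) := hmain
    _ = μH[(n : ℝ)] (F ∩ ball x r) := by simp
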